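/- Let f : ℝ → ℝ be a C¹ function with f(x) > 0 for all x, let h, c ∈ ℝ, and let t, σ : ℝ → ℝ be differentiable functions satisfying, for all s, the equations t'(s) = cos σ(s) and σ'(s) = h − (f'(t(s))/f(t(s)))·sin σ(s). Then the function s ↦ f(t(s))·sin σ(s) − h·∫_{c}^{t(s)} f(ξ) dξ is constant on ℝ. -/

import Mathlib

open Real MeasureTheory intervalIntegral

/-- First integral of the constant geodesic curvature system (Proposition 1.1):
along any solution of `t' = cos σ`, `σ' = h − (f'(t)/f(t)) sin σ`, the quantity
`f(t) sin σ − h ∫_c^t f` is constant. -/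
theorem stmt_0 (f : ℝ → ℝ) (hf : ContDiff ℝ 1 f) (hfpos : ∀ x, 0 < f x)
    (h c : ℝ) (t σ : ℝ → ℝ) (ht : Differentiable ℝ t) (hσ : Differentiable ℝ σ)
    (heq1 : ∀ s, deriv t s = Real.cos (σ s))
    (heq2 : ∀ s, deriv σ s = h - (deriv f (t s) / f (t s)) * Real.sin (σ s)) :
    ∃ k : ℝ, ∀ s : ℝ,
      f (t s) * Real.sin (σ s) - h * (∫ ξ in c..(t s), f ξ) = k := by
  set g : ℝ → ℝ := fun s => f (t s) * Real.sin (σ s) - h * (∫ ξ in c..(t s), f ξ)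
    with hg
  have hfd : Differentiable ℝ f := hf.differentiable one_ne_zero
  have key : ∀ s, HasDerivAt g 0 s := by
    intro s
    have h1 : HasDerivAt t (Real.cos (σ s)) s := by
      simpa [heq1 s] using (ht s).hasDerivAt
    have h2 : HasDerivAt σ (h - (deriv f (t s) / f (t s)) * Real.sin (σ s)) s := by
      simpa [heq2 s] using (hσ s).hasDerivAt
    have hft : HasDerivAt (fun s => f (t s)) (deriv f (t s) * Real.cos (σ s)) s :=
      (hfd (t s)).hasDerivAt.comp s h1
    have hsin : HasDerivAt (fun s => Real.sin (σ s))
        (Real.cos (σ s) * (h - (deriv f (t s) / f (t s)) * Real.sin (σ s))) s :=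
      (Real.hasDerivAt_sin (σ s)).comp s h2
    have hint : HasDerivAt (fun s => ∫ ξ in c..(t s), f ξ)
        (f (t s) * Real.cos (σ s)) s :=
      ((hf.continuous.integral_hasStrictDerivAt c (t s)).hasDerivAt).comp s h1
    have := ((hft.mul hsin).sub (hint.const_mul h))
    refine this.congr_deriv ?_
    have hne : f (t s) ≠ 0 := (hfpos (t s)).ne'
    have e : f (t s) * (deriv f (t s) / f (t s)) = deriv f (t s) := mul_div_cancel₀ _ hne
    linear_combination (-(Real.cos (σ s) * Real.sin (σ s))) * e
  have hgdiff : Differentiable ℝ g := fun s => (key s).differentiableAt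
  refine ⟨g 0, fun s => ?_⟩
  have := is_const_of_deriv_eq_zero hgdiff (fun x => (key x).deriv) s 0
  simpa [hg] using this
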